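/- If T is a rooted tree that does not consist only of the root, then the multiplicity of 1 as an eigenvalue of the ancestral matrix C(T) equals (the number of leaves of T) minus (the number of non-root vertices of T that are adjacent to at least one leaf). -/

import Mathlib

open Matrix

/-- A rooted tree on a finite vertex type `V`, encoded by its root and the
parent function: the root is its own parent, and iterating the parent function
from any vertex eventually reaches the root.  (These conditions force the graph
whose edges join each non-root vertex to its parent to be a tree.) -/
structure TreeOn (V : Type) [Fintype V] [DecidableEq V] where
  root : V
  parent : V → V
  parent_root : parent root = root
  reaches : ∀ v, ∃ k, parent^[k] v = root

namespace TreeOn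

variable {V : Type} [Fintype V] [DecidableEq V]

/-- `u` is a (weak) ancestor of `v`: some iterate of the parent function sends
`v` to `u`.  (Any ancestor is reached within `Fintype.card V` steps, so the
bound makes the predicate decidable without changing its meaning.) -/
def IsAncestor (T : TreeOn V) (u v : V) : Prop :=
  ∃ k, k ≤ Fintype.card V ∧ T.parent^[k] v = u

instance (T : TreeOn V) (u v : V) : Decidable (T.IsAncestor u v) := by
  have h : T.IsAncestor u v ↔ ∃ k ∈ Finset.range (Fintype.card V + 1), T.parent^[k] v = u := by
    simp [IsAncestor, Nat.lt_succ_iff]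
  rw [h]; infer_instance

/-- The level of a vertex: its distance to the root. -/
def level (T : TreeOn V) (v : V) : ℕ := Nat.find (T.reaches v)

/-- The ancestral level `ℓ(v ∨ w)`: the level of the lowest common ancestor
of `v` and `w`, i.e. the greatest level of a common ancestor. -/
def lcaLevel (T : TreeOn V) (v w : V) : ℕ :=
  (Finset.univ.filter fun u => T.IsAncestor u v ∧ T.IsAncestor u w).sup T.level

/-- A leaf is a vertex with no children. -/
def IsLeaf (T : TreeOn V) (v : V) : Prop := ∀ u, T.parent u = v → u = v

instance (T : TreeOn V) : DecidablePred T.IsLeaf := fun v =>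
  inferInstanceAs (Decidable (∀ u, T.parent u = v → u = v))

/-- The type of leaves of `T`. -/
abbrev Leaf (T : TreeOn V) := {v : V // T.IsLeaf v}

/-- The ancestral matrix `C(T)`, indexed by the leaves of `T`, whose
`(v, w)` entry is the ancestral level `ℓ(v ∨ w)`. -/
noncomputable def ancMatrix (T : TreeOn V) : Matrix T.Leaf T.Leaf ℝ :=
  Matrix.of fun v w => (T.lcaLevel v.1 w.1 : ℝ)

/-- The ancestral spectral radius `ρ_C(T)`: the largest eigenvalue of `C(T)`. -/
noncomputable def rhoC (T : TreeOn V) : ℝ :=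
  sSup {μ : ℝ | ∃ x : T.Leaf → ℝ, x ≠ 0 ∧ T.ancMatrix.mulVec x = μ • x}

/-- The underlying simple graph of the tree: each non-root vertex is joined
to its parent. -/
def graph (T : TreeOn V) : SimpleGraph V :=
  SimpleGraph.fromRel fun u v => T.parent u = v ∧ u ≠ v

/-- The number of children (outdegree) of a vertex. -/
def childCount (T : TreeOn V) (v : V) : ℕ :=
  (Finset.univ.filter fun u => T.parent u = v ∧ u ≠ v).card

variable (T : TreeOn V)

lemma iterate_root (k : ℕ) : T.parent^[k] T.root = T.root :=
  Function.iterate_fixed T.parent_root k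

lemma iterate_level : T.parent^[T.level v] v = T.root := Nat.find_spec (T.reaches v)

lemma level_root : T.level T.root = 0 := by
  simp [level, Nat.find_eq_zero]

lemma eq_root_of_parent_eq {v : V} (h : T.parent v = v) : v = T.root := by
  obtain ⟨k, hk⟩ := T.reaches v
  rw [Function.iterate_fixed h k] at hk; exact hk

lemma level_eq_zero {v : V} : T.level v = 0 ↔ v = T.root := by
  constructor
  · intro h
    have := T.iterate_level (v := v); rw [h] at this; simpa using this
  · rintro rfl; exact T.level_root

lemma iterate_eq_root_iff {v : V} {k : ℕ} :
    T.parent^[k] v = T.root ↔ T.level v ≤ k := by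
  constructor
  · intro h; exact Nat.find_min' _ h
  · intro h
    have : k = (k - T.level v) + T.level v := by omega
    rw [this, Function.iterate_add_apply, T.iterate_level, T.iterate_root]

lemma level_parent {v : V} (h : v ≠ T.root) :
    T.level (T.parent v) + 1 = T.level v := by
  have h0 : T.level v ≠ 0 := fun hh => h (T.level_eq_zero.1 hh)
  have h1 : T.parent^[T.level v - 1] (T.parent v) = T.root := by
    have := T.iterate_level (v := v)
    rwa [show T.level v = (T.level v - 1) + 1 by omega, Function.iterate_succ_apply] at this
  have h2 : T.level (T.parent v) ≤ T.level v - 1 := T.iterate_eq_root_iff.1 h1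
  have h3 : T.parent^[T.level (T.parent v) + 1] v = T.root := by
    rw [Function.iterate_succ_apply]; exact T.iterate_level
  have h4 := T.iterate_eq_root_iff.1 h3
  omega

lemma level_iterate {v : V} {k : ℕ} (h : k ≤ T.level v) :
    T.level (T.parent^[k] v) = T.level v - k := by
  induction k with
  | zero => simp
  | succ n ih =>
    have hn : n ≤ T.level v := by omega
    have hx : T.parent^[n] v ≠ T.root := by
      intro hr
      have := T.iterate_eq_root_iff.1 hr; omega
    have := T.level_parent hx
    rw [Function.iterate_succ_apply']
    rw [ih hn] at this
    omega

lemma level_le_card (v : V) : T.level v ≤ Fintype.card V := by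
  have hinj : Function.Injective (fun k : Fin (T.level v + 1) => T.parent^[(k : ℕ)] v) := by
    intro i j hij
    have hi := T.level_iterate (v := v) (k := i) (by omega)
    have hj := T.level_iterate (v := v) (k := j) (by omega)
    have hij' : T.parent^[(i:ℕ)] v = T.parent^[(j:ℕ)] v := hij
    rw [hij'] at hi
    have : (i : ℕ) = j := by omega
    exact Fin.ext this
  have := Fintype.card_le_of_injective _ hinj
  simp at this; omega

lemma isAncestor_iff {u v : V} : T.IsAncestor u v ↔ ∃ k, T.parent^[k] v = u := by
  constructor
  · rintro ⟨k, _, hk⟩; exact ⟨k, hk⟩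
  · rintro ⟨k, hk⟩
    by_cases h : k ≤ T.level v
    · exact ⟨k, le_trans h (T.level_le_card v), hk⟩
    · have : T.parent^[k] v = T.root := T.iterate_eq_root_iff.2 (by omega)
      exact ⟨T.level v, T.level_le_card v, by rw [T.iterate_level, ← this, hk]⟩

lemma isAncestor_iff_le_level {u v : V} :
    T.IsAncestor u v ↔ ∃ k, k ≤ T.level v ∧ T.parent^[k] v = u := by
  rw [T.isAncestor_iff]
  constructor
  · rintro ⟨k, hk⟩
    by_cases h : k ≤ T.level v
    · exact ⟨k, h, hk⟩
    · have : T.parent^[k] v = T.root := T.iterate_eq_root_iff.2 (by omega)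
      exact ⟨T.level v, le_rfl, by rw [T.iterate_level, ← this, hk]⟩
  · rintro ⟨k, _, hk⟩; exact ⟨k, hk⟩

lemma isAncestor_refl (v : V) : T.IsAncestor v v := T.isAncestor_iff.2 ⟨0, rfl⟩

lemma isAncestor_root (v : V) : T.IsAncestor T.root v :=
  T.isAncestor_iff.2 ⟨T.level v, T.iterate_level⟩

lemma isAncestor_trans {u v w : V} (h1 : T.IsAncestor u v) (h2 : T.IsAncestor v w) :
    T.IsAncestor u w := by
  obtain ⟨k1, hk1⟩ := T.isAncestor_iff.1 h1
  obtain ⟨k2, hk2⟩ := T.isAncestor_iff.1 h2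
  exact T.isAncestor_iff.2 ⟨k1 + k2, by rw [Function.iterate_add_apply, hk2, hk1]⟩

lemma level_le_of_isAncestor {u v : V} (h : T.IsAncestor u v) : T.level u ≤ T.level v := by
  obtain ⟨k, hk, rfl⟩ := T.isAncestor_iff_le_level.1 h
  rw [T.level_iterate hk]; omega

lemma eq_of_isAncestor_of_level_eq {u v : V} (h : T.IsAncestor u v)
    (hl : T.level u = T.level v) : u = v := by
  obtain ⟨k, hk, rfl⟩ := T.isAncestor_iff_le_level.1 h
  have := T.level_iterate hk
  have : k = 0 := by omega
  subst this; rfl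

lemma isAncestor_total {u1 u2 v : V} (h1 : T.IsAncestor u1 v) (h2 : T.IsAncestor u2 v) :
    T.IsAncestor u1 u2 ∨ T.IsAncestor u2 u1 := by
  obtain ⟨k1, hk1⟩ := T.isAncestor_iff.1 h1
  obtain ⟨k2, hk2⟩ := T.isAncestor_iff.1 h2
  rcases le_total k1 k2 with h | h
  · right
    refine T.isAncestor_iff.2 ⟨k2 - k1, ?_⟩
    rw [← hk1, ← Function.iterate_add_apply, show k2 - k1 + k1 = k2 by omega, hk2]
  · left
    refine T.isAncestor_iff.2 ⟨k1 - k2, ?_⟩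
    rw [← hk2, ← Function.iterate_add_apply, show k1 - k2 + k2 = k1 by omega, hk1]

lemma isAncestor_root_right {u : V} (h : T.IsAncestor u T.root) : u = T.root := by
  obtain ⟨k, hk⟩ := T.isAncestor_iff.1 h
  rw [T.iterate_root] at hk; exact hk.symm

lemma eq_of_isAncestor_leaf {v z : V} (hv : T.IsLeaf v) (h : T.IsAncestor v z) : z = v := by
  obtain ⟨k, hk⟩ := T.isAncestor_iff.1 h
  clear h
  induction k generalizing z with
  | zero => exact hk
  | succ n ih =>
    rw [Function.iterate_succ_apply'] at hk
    exact ih (hv _ hk)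

lemma isAncestor_parent {u v : V} (h : T.IsAncestor u v) (hne : u ≠ v) :
    T.IsAncestor u (T.parent v) := by
  obtain ⟨k, hk⟩ := T.isAncestor_iff.1 h
  have hk0 : k ≠ 0 := by rintro rfl; exact hne hk.symm
  obtain ⟨n, rfl⟩ := Nat.exists_eq_succ_of_ne_zero hk0
  rw [Function.iterate_succ_apply] at hk
  exact T.isAncestor_iff.2 ⟨n, hk⟩

lemma isAncestor_of_parent {u v : V} (h : T.IsAncestor u (T.parent v)) :
    T.IsAncestor u v := by
  obtain ⟨k, hk⟩ := T.isAncestor_iff.1 h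
  exact T.isAncestor_iff.2 ⟨k + 1, by rwa [Function.iterate_succ_apply]⟩

lemma isAncestor_parent_self (v : V) : T.IsAncestor (T.parent v) v :=
  T.isAncestor_iff.2 ⟨1, rfl⟩

/-! lcaLevel lemmas -/

lemma lcaLevel_comm (v w : V) : T.lcaLevel v w = T.lcaLevel w v := by
  unfold lcaLevel
  congr 1
  ext u
  simp [and_comm]

lemma lcaLevel_of_isAncestor {u v : V} (h : T.IsAncestor u v) :
    T.lcaLevel u v = T.level u := by
  apply le_antisymm
  · apply Finset.sup_le
    intro x hx
    simp only [Finset.mem_filter] at hx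
    exact T.level_le_of_isAncestor hx.2.1
  · exact Finset.le_sup (by simp [T.isAncestor_refl, h])

lemma lcaLevel_root_left (z : V) : T.lcaLevel T.root z = 0 := by
  rw [T.lcaLevel_of_isAncestor (T.isAncestor_root z), T.level_root]

lemma lcaLevel_self (v : V) : T.lcaLevel v v = T.level v :=
  T.lcaLevel_of_isAncestor (T.isAncestor_refl v)

lemma lcaLevel_leaf_left {v z : V} (hv : T.IsLeaf v) (hz : z ≠ v) :
    T.lcaLevel v z = T.lcaLevel (T.parent v) z := by
  unfold lcaLevel
  congr 1
  ext u
  simp only [Finset.mem_filter, Finset.mem_univ, true_and]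
  constructor
  · rintro ⟨h1, h2⟩
    have hne : u ≠ v := by
      rintro rfl
      exact hz (T.eq_of_isAncestor_leaf hv h2)
    exact ⟨T.isAncestor_parent h1 hne, h2⟩
  · rintro ⟨h1, h2⟩
    exact ⟨T.isAncestor_of_parent h1, h2⟩

lemma card_nonroot_ancestors (m : V) :
    (Finset.univ.filter fun u => u ≠ T.root ∧ T.IsAncestor u m).card = T.level m := by
  rw [← Finset.card_range (T.level m)]
  symm
  apply Finset.card_bij (fun k _ => T.parent^[k] m)
  · intro k hk
    simp only [Finset.mem_range] at hk
    simp only [Finset.mem_filter, Finset.mem_univ, true_and]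
    constructor
    · intro hr
      have := T.iterate_eq_root_iff.1 hr; omega
    · exact T.isAncestor_iff.2 ⟨k, rfl⟩
  · intro k1 hk1 k2 hk2 heq
    simp only [Finset.mem_range] at hk1 hk2
    have h1 := T.level_iterate (v := m) (k := k1) (by omega)
    have h2 := T.level_iterate (v := m) (k := k2) (by omega)
    rw [heq] at h1
    omega
  · intro u hu
    simp only [Finset.mem_filter, Finset.mem_univ, true_and] at hu
    obtain ⟨k, hk, hku⟩ := T.isAncestor_iff_le_level.1 hu.2
    have hklt : k < T.level m := by
      rcases lt_or_eq_of_le hk with h | h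
      · exact h
      · exfalso; subst h; rw [T.iterate_level] at hku; exact hu.1 hku.symm
    exact ⟨k, Finset.mem_range.2 hklt, hku⟩

lemma lcaLevel_eq_card (v w : V) :
    T.lcaLevel v w =
      (Finset.univ.filter fun u => u ≠ T.root ∧ T.IsAncestor u v ∧ T.IsAncestor u w).card := by
  have hne : (Finset.univ.filter fun u => T.IsAncestor u v ∧ T.IsAncestor u w).Nonempty :=
    ⟨T.root, by simp [T.isAncestor_root]⟩
  obtain ⟨m, hm, hsup⟩ := Finset.exists_mem_eq_sup _ hne T.level
  simp only [Finset.mem_filter, Finset.mem_univ, true_and] at hm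
  have key : ∀ u, (T.IsAncestor u v ∧ T.IsAncestor u w) ↔ T.IsAncestor u m := by
    intro u
    constructor
    · rintro ⟨h1, h2⟩
      rcases T.isAncestor_total h1 hm.1 with h | h
      · exact h
      · have hle : T.level u ≤ T.level m := by
          rw [← hsup]
          exact Finset.le_sup (by simp [h1, h2])
        have := T.level_le_of_isAncestor h
        have : m = u := T.eq_of_isAncestor_of_level_eq h (by omega)
        subst this; exact T.isAncestor_refl m
    · intro h
      exact ⟨T.isAncestor_trans h hm.1, T.isAncestor_trans h hm.2⟩
  have hsets : (Finset.univ.filter fun u => u ≠ T.root ∧ T.IsAncestor u v ∧ T.IsAncestor u w)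
      = (Finset.univ.filter fun u => u ≠ T.root ∧ T.IsAncestor u m) := by
    ext u; simp [key u, and_assoc]
  rw [hsets, show T.lcaLevel v w = T.level m from hsup, T.card_nonroot_ancestors m]

/-! Leaves and roots -/

lemma not_isLeaf_root (hT : ∃ v, v ≠ T.root) : ¬ T.IsLeaf T.root := by
  obtain ⟨v, hv⟩ := hT
  intro hleaf
  have h0 : T.level v ≠ 0 := fun h => hv (T.level_eq_zero.1 h)
  set c := T.parent^[T.level v - 1] v with hc
  have hlc : T.level c = 1 := by
    rw [hc, T.level_iterate (by omega)]; omega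
  have hpc : T.parent c = T.root := by
    have h5 : T.parent^[T.level v - 1 + 1] v = T.parent (T.parent^[T.level v - 1] v) :=
      Function.iterate_succ_apply' _ _ _
    rw [hc, ← h5, show T.level v - 1 + 1 = T.level v by omega]
    exact T.iterate_level
  have := hleaf c hpc
  rw [this] at hlc
  rw [T.level_root] at hlc
  omega

lemma leaf_ne_root (hT : ∃ v, v ≠ T.root) {v : V} (hv : T.IsLeaf v) : v ≠ T.root :=
  fun h => T.not_isLeaf_root hT (h ▸ hv)

/-- The row function associated to a vertex. -/
noncomputable def rowFn (T : TreeOn V) (u : V) : T.Leaf → ℝ :=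
  fun z => (T.lcaLevel u z.1 : ℝ)

lemma rowFn_root : T.rowFn T.root = 0 := by
  funext z
  simp [rowFn, T.lcaLevel_root_left]

lemma row_sub_one (hT : ∃ v, v ≠ T.root) (v : T.Leaf) :
    (T.ancMatrix - 1) v = T.rowFn (T.parent v.1) := by
  funext z
  have hvr : v.1 ≠ T.root := T.leaf_ne_root hT v.2
  by_cases hz : z = v
  · subst hz
    have hlp : T.level (T.parent z.1) + 1 = T.level z.1 := T.level_parent hvr
    have h1 : T.lcaLevel z.1 z.1 = T.level z.1 := T.lcaLevel_self z.1
    have h2 : T.lcaLevel (T.parent z.1) z.1 = T.level (T.parent z.1) :=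
      T.lcaLevel_of_isAncestor (T.isAncestor_parent_self z.1)
    simp only [Matrix.sub_apply, Matrix.one_apply_eq, ancMatrix, Matrix.of_apply, rowFn,
      h1, h2]
    rw [← hlp]
    push_cast
    ring
  · have h3 : z.1 ≠ v.1 := fun h => hz (Subtype.ext h)
    have h4 : T.lcaLevel v.1 z.1 = T.lcaLevel (T.parent v.1) z.1 :=
      T.lcaLevel_leaf_left v.2 h3
    simp only [Matrix.sub_apply, Matrix.one_apply_ne (fun h => hz (h.symm)), ancMatrix,
      Matrix.of_apply, rowFn, h4]
    ring

/-- The finset of non-root vertices that are parents of leaves. -/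
def parentSet (T : TreeOn V) : Finset V :=
  Finset.univ.filter fun u => u ≠ T.root ∧ ∃ w, T.IsLeaf w ∧ T.parent w = u

lemma not_isLeaf_of_mem_parentSet {u : V} (hu : u ∈ T.parentSet) : ¬ T.IsLeaf u := by
  obtain ⟨-, hur, w, hwl, hwp⟩ := Finset.mem_filter.1 hu
  intro hleaf
  have hwu : w = u := hleaf w hwp
  subst hwu
  exact hur (T.eq_root_of_parent_eq hwp)

lemma star_identity (x y : V) :
    (T.lcaLevel x y : ℝ) = ∑ w ∈ Finset.univ.filter (· ≠ T.root),
      (if T.IsAncestor w x then (1:ℝ) else 0) * (if T.IsAncestor w y then (1:ℝ) else 0) := by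
  rw [T.lcaLevel_eq_card x y, Finset.natCast_card_filter, Finset.sum_filter]
  refine Finset.sum_congr rfl fun w _ => ?_
  by_cases h1 : w = T.root <;> by_cases h2 : T.IsAncestor w x <;>
    by_cases h3 : T.IsAncestor w y <;> simp [h1, h2, h3]

lemma rows_linearIndependent (hT : ∃ v, v ≠ T.root) :
    LinearIndependent ℝ (fun u : {x : V // x ∈ T.parentSet} => T.rowFn u.1) := by
  rw [Fintype.linearIndependent_iff]
  intro g hg
  -- Step 1: the combination vanishes against each element of parentSet
  have step1 : ∀ u' : {x : V // x ∈ T.parentSet},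
      ∑ u : {x : V // x ∈ T.parentSet}, g u * (T.lcaLevel u.1 u'.1 : ℝ) = 0 := by
    intro u'
    obtain ⟨-, hur, w', hw'l, hw'p⟩ := Finset.mem_filter.1 u'.2
    have hval := congrFun hg ⟨w', hw'l⟩
    rw [Finset.sum_apply] at hval
    simp only [Pi.smul_apply, smul_eq_mul, Pi.zero_apply] at hval
    rw [← hval]
    refine Finset.sum_congr rfl fun u _ => ?_
    have hune : u.1 ≠ w' := fun h => T.not_isLeaf_of_mem_parentSet u.2 (h ▸ hw'l)
    have : T.lcaLevel u.1 w' = T.lcaLevel u.1 u'.1 := by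
      rw [T.lcaLevel_comm, T.lcaLevel_leaf_left hw'l hune, hw'p, T.lcaLevel_comm]
    rw [rowFn, this]
  -- Step 2: indicator combinations vanish at every non-root vertex
  have step2 : ∀ w, w ≠ T.root →
      (∑ u : {x : V // x ∈ T.parentSet}, g u * (if T.IsAncestor w u.1 then (1:ℝ) else 0)) = 0 := by
    have A : ∑ u' : {x : V // x ∈ T.parentSet}, ∑ u : {x : V // x ∈ T.parentSet},
        g u' * g u * (T.lcaLevel u.1 u'.1 : ℝ) = 0 := by
      refine Finset.sum_eq_zero fun u' _ => ?_
      have := step1 u'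
      calc ∑ u : {x : V // x ∈ T.parentSet}, g u' * g u * (T.lcaLevel u.1 u'.1 : ℝ)
          = g u' * ∑ u : {x : V // x ∈ T.parentSet}, g u * (T.lcaLevel u.1 u'.1 : ℝ) := by
            rw [Finset.mul_sum]; refine Finset.sum_congr rfl fun u _ => by ring
        _ = 0 := by rw [this, mul_zero]
    have hzero : ∑ w ∈ Finset.univ.filter (· ≠ T.root),
        (∑ u : {x : V // x ∈ T.parentSet}, g u * (if T.IsAncestor w u.1 then (1:ℝ) else 0))^2
        = 0 := by
      calc ∑ w ∈ Finset.univ.filter (· ≠ T.root),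
            (∑ u : {x : V // x ∈ T.parentSet}, g u * (if T.IsAncestor w u.1 then (1:ℝ) else 0))^2
          = ∑ w ∈ Finset.univ.filter (· ≠ T.root), ∑ u' : {x : V // x ∈ T.parentSet},
              ∑ u : {x : V // x ∈ T.parentSet},
              (g u' * (if T.IsAncestor w u'.1 then (1:ℝ) else 0)) *
              (g u * (if T.IsAncestor w u.1 then (1:ℝ) else 0)) := by
            refine Finset.sum_congr rfl fun w _ => ?_
            rw [sq, Finset.sum_mul_sum]
        _ = ∑ u' : {x : V // x ∈ T.parentSet}, ∑ u : {x : V // x ∈ T.parentSet},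
              ∑ w ∈ Finset.univ.filter (· ≠ T.root),
              (g u' * (if T.IsAncestor w u'.1 then (1:ℝ) else 0)) *
              (g u * (if T.IsAncestor w u.1 then (1:ℝ) else 0)) := by
            rw [Finset.sum_comm]
            exact Finset.sum_congr rfl fun u' _ => Finset.sum_comm
        _ = ∑ u' : {x : V // x ∈ T.parentSet}, ∑ u : {x : V // x ∈ T.parentSet},
              g u' * g u * (T.lcaLevel u.1 u'.1 : ℝ) := by
            refine Finset.sum_congr rfl fun u' _ => Finset.sum_congr rfl fun u _ => ?_
            rw [T.star_identity u.1 u'.1, Finset.mul_sum]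
            refine Finset.sum_congr rfl fun w _ => by ring
        _ = 0 := A
    intro w hw
    have hmem : w ∈ Finset.univ.filter (· ≠ T.root) := by simp [hw]
    have := (Finset.sum_eq_zero_iff_of_nonneg
      (fun x _ => sq_nonneg _)).1 hzero w hmem
    exact pow_eq_zero_iff (by norm_num) |>.1 this
  -- Step 3: maximal level argument
  by_contra hcon
  push_neg at hcon
  obtain ⟨i, hi⟩ := hcon
  have hAne : (Finset.univ.filter fun u : {x : V // x ∈ T.parentSet} => g u ≠ 0).Nonempty :=
    ⟨i, by simp [hi]⟩
  obtain ⟨u0, hu0A, hmax⟩ := Finset.exists_max_image _ (fun u => T.level u.1) hAne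
  have hu0g : g u0 ≠ 0 := (Finset.mem_filter.1 hu0A).2
  have hu0root : u0.1 ≠ T.root := (Finset.mem_filter.1 u0.2).2.1
  have hzero := step2 u0.1 hu0root
  rw [Finset.sum_eq_single u0] at hzero
  · rw [if_pos (T.isAncestor_refl u0.1), mul_one] at hzero
    exact hu0g hzero
  · intro b _ hbne
    by_cases hgb : g b = 0
    · rw [hgb, zero_mul]
    · have hbA : b ∈ Finset.univ.filter fun u : {x : V // x ∈ T.parentSet} => g u ≠ 0 := by
        simp [hgb]
      have hble := hmax b hbA
      have hnanc : ¬ T.IsAncestor u0.1 b.1 := by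
        intro hanc
        have := T.level_le_of_isAncestor hanc
        have heq : u0.1 = b.1 := T.eq_of_isAncestor_of_level_eq hanc (by omega)
        exact hbne (Subtype.ext heq.symm)
      rw [if_neg hnanc, mul_zero]
  · intro h
    exact absurd (Finset.mem_univ u0) h

end TreeOn

open Classical in
/-- If a rooted tree `T` does not consist only of the root,
then the multiplicity of `1` as an eigenvalue of the ancestral matrix `C(T)`
(i.e. the dimension of the eigenspace of `1`, which coincides with the
algebraic multiplicity since `C(T)` is real symmetric) equals the number of
leaves of `T` minus the number of non-root vertices of `T` adjacent to at
least one leaf. -/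
theorem multiplicity_one_eigenvalue_ancMatrix
    {V : Type} [Fintype V] [DecidableEq V] (T : TreeOn V)
    (hT : ∃ v, v ≠ T.root) :
    Module.finrank ℝ
        (Module.End.eigenspace
          (Matrix.toLin' T.ancMatrix : Module.End ℝ (T.Leaf → ℝ)) 1) =
      Fintype.card T.Leaf -
        (Finset.univ.filter fun u : V =>
          u ≠ T.root ∧ ∃ w, T.IsLeaf w ∧ T.graph.Adj u w).card := by
  classical
  have hSeq : (Finset.univ.filter fun u : V =>
      u ≠ T.root ∧ ∃ w, T.IsLeaf w ∧ T.graph.Adj u w) = T.parentSet := by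
    ext u
    simp only [TreeOn.parentSet, Finset.mem_filter, Finset.mem_univ, true_and]
    constructor
    · rintro ⟨hur, w, hwl, hadj⟩
      refine ⟨hur, w, hwl, ?_⟩
      simp only [TreeOn.graph, SimpleGraph.fromRel_adj] at hadj
      obtain ⟨hne, h | h⟩ := hadj
      · exact absurd (hwl u h.1) hne
      · exact h.1
    · rintro ⟨hur, w, hwl, hwp⟩
      have hwu : w ≠ u := by
        rintro rfl
        exact hur (T.eq_root_of_parent_eq hwp)
      exact ⟨hur, w, hwl, by
        simp only [TreeOn.graph, SimpleGraph.fromRel_adj]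
        exact ⟨hwu.symm, Or.inr ⟨hwp, hwu⟩⟩⟩
  rw [hSeq]
  rw [Module.End.eigenspace_def, one_smul]
  have hlin : (Matrix.toLin' T.ancMatrix : Module.End ℝ (T.Leaf → ℝ)) - 1 =
      Matrix.toLin' (T.ancMatrix - 1) := by
    rw [map_sub, Matrix.toLin'_one]
    rfl
  rw [hlin]
  have hrn := LinearMap.finrank_range_add_finrank_ker (Matrix.toLin' (T.ancMatrix - 1))
  have hdim : Module.finrank ℝ (T.Leaf → ℝ) = Fintype.card T.Leaf := Module.finrank_pi ℝ
  have hsym : (T.ancMatrix - 1)ᵀ = T.ancMatrix - 1 := by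
    rw [Matrix.transpose_sub, Matrix.transpose_one]
    congr 1
    ext v w
    simp [TreeOn.ancMatrix, T.lcaLevel_comm v.1 w.1]
  have hrange : Module.finrank ℝ
      (LinearMap.range (Matrix.toLin' (T.ancMatrix - 1))) = T.parentSet.card := by
    have hr : LinearMap.range (Matrix.toLin' (T.ancMatrix - 1)) =
        Submodule.span ℝ (Set.range (T.ancMatrix - 1)ᵀ) := by
      rw [Matrix.range_toLin']; rfl
    rw [hr, hsym]
    have hspan : Submodule.span ℝ (Set.range (T.ancMatrix - 1)) =
        Submodule.span ℝ (Set.range fun u : {x : V // x ∈ T.parentSet} => T.rowFn u.1) := by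
      apply le_antisymm
      · rw [Submodule.span_le]
        rintro _ ⟨v, rfl⟩
        erw [T.row_sub_one hT v]
        by_cases hpr : T.parent v.1 = T.root
        · rw [hpr, T.rowFn_root]
          exact Submodule.zero_mem _
        · have hmem : T.parent v.1 ∈ T.parentSet := by
            simp only [TreeOn.parentSet, Finset.mem_filter, Finset.mem_univ, true_and]
            exact ⟨hpr, v.1, v.2, rfl⟩
          exact Submodule.subset_span ⟨⟨T.parent v.1, hmem⟩, rfl⟩
      · rw [Submodule.span_le]
        rintro _ ⟨u, rfl⟩
        obtain ⟨-, hur, w, hwl, hwp⟩ := Finset.mem_filter.1 u.2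
        have hrow : T.rowFn u.1 = (T.ancMatrix - 1) ⟨w, hwl⟩ := by
          rw [T.row_sub_one hT ⟨w, hwl⟩]
          simp only [hwp]
        show T.rowFn u.1 ∈ _
        rw [hrow]
        exact Submodule.subset_span ⟨⟨w, hwl⟩, rfl⟩
    erw [hspan]
    rw [finrank_span_eq_card (T.rows_linearIndependent hT), Fintype.card_coe]
  rw [hrange, hdim] at hrn
  omega
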